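/- Let S ⊆ {0,1}^n and let u ∈ {0,1}^n be a vector with 𝟙(u) ≠ ∅. For i ∈ [n] let X_i = {v ∈ S : v_i = 1}. Then u belongs to the closure of S under coordinatewise conjunction and disjunction {∧, ∨} if and only if X_i ≠ ∅ for every i ∈ 𝟙(u) and u = ⋁_{i ∈ 𝟙(u)} ⋀_{v ∈ X_i} v (coordinatewise join of coordinatewise meets). -/

import Mathlib

/-- A finitary operation on `D`: an arity `t` together with a function `D^t → D`. -/
abbrev Op (D : Type*) := Σ t : ℕ, (Fin t → D) → D

/-- The closure of a set `S` of vectors under the coordinatewise application of the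
operations in `F`. -/
inductive Cl {D ι : Type*} (F : Set (Op D)) (S : Set (ι → D)) : (ι → D) → Prop
  | base {v : ι → D} : v ∈ S → Cl F S v
  | app {t : ℕ} {f : (Fin t → D) → D} (hf : (⟨t, f⟩ : Op D) ∈ F)
      (vs : Fin t → ι → D) (hvs : ∀ j, Cl F S (vs j)) :
      Cl F S (fun i => f fun j => vs j i)

def Fao : Set (Op Bool) :=
  {(⟨2, fun x => x 0 && x 1⟩ : Op Bool), (⟨2, fun x => x 0 || x 1⟩ : Op Bool)}

section helpers
variable {n : ℕ} (S : Set (Fin n → Bool))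

lemma clA {w : Fin n → Bool} (h : Cl Fao S w) :
    ∀ i j, w i = true → (∀ v ∈ S, v i = true → v j = true) → w j = true := by
  induction h with
  | base hv => exact fun i j hi hall => hall _ hv hi
  | app hf vs hvs ih =>
    intro i j hi hall
    rw [Fao, Set.mem_insert_iff, Set.mem_singleton_iff] at hf
    rcases hf with hf | hf <;>
    · rw [Sigma.mk.inj_iff] at hf
      obtain ⟨rfl, hf⟩ := hf
      rw [heq_iff_eq] at hf
      subst hf
      simp only [Bool.and_eq_true, Bool.or_eq_true] at hi ⊢
      first
      | exact ⟨ih 0 i j hi.1 hall, ih 1 i j hi.2 hall⟩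
      | exact hi.imp (fun h => ih 0 i j h hall) (fun h => ih 1 i j h hall)

lemma clB {w : Fin n → Bool} (h : Cl Fao S w) :
    ∀ i, w i = true → ∃ v ∈ S, v i = true := by
  induction h with
  | base hv => exact fun i hi => ⟨_, hv, hi⟩
  | app hf vs hvs ih =>
    intro i hi
    rw [Fao, Set.mem_insert_iff, Set.mem_singleton_iff] at hf
    rcases hf with hf | hf <;>
    · rw [Sigma.mk.inj_iff] at hf
      obtain ⟨rfl, hf⟩ := hf
      rw [heq_iff_eq] at hf
      subst hf
      simp only [Bool.and_eq_true, Bool.or_eq_true] at hi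
      first
      | exact ih 0 i hi.1
      | exact hi.elim (ih 0 i) (ih 1 i)

lemma cl_sup {a b : Fin n → Bool} (ha : Cl Fao S a) (hb : Cl Fao S b) : Cl Fao S (a ⊔ b) := by
  have := Cl.app (F := Fao) (S := S) (f := fun x : Fin 2 → Bool => x 0 || x 1)
    (Or.inr rfl) ![a, b] (by intro j; fin_cases j <;> assumption)
  convert this using 1
  rfl

lemma cl_inf {a b : Fin n → Bool} (ha : Cl Fao S a) (hb : Cl Fao S b) : Cl Fao S (a ⊓ b) := by
  have := Cl.app (F := Fao) (S := S) (f := fun x : Fin 2 → Bool => x 0 && x 1)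
    (Or.inl rfl) ![a, b] (by intro j; fin_cases j <;> assumption)
  convert this using 1
  rfl

lemma cl_sup' {α : Type*} (s : Finset α) (h : s.Nonempty) (f : α → Fin n → Bool)
    (hf : ∀ a ∈ s, Cl Fao S (f a)) : Cl Fao S (s.sup' h f) := by
  induction h using Finset.Nonempty.cons_induction with
  | singleton a => simpa using hf a (by simp)
  | cons a s ha hs ih =>
    rw [Finset.sup'_cons hs]
    exact cl_sup S (hf a (by simp)) (ih fun b hb => hf b (by simp [hb]))

lemma cl_inf' {α : Type*} (s : Finset α) (h : s.Nonempty) (f : α → Fin n → Bool)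
    (hf : ∀ a ∈ s, Cl Fao S (f a)) : Cl Fao S (s.inf' h f) := by
  induction h using Finset.Nonempty.cons_induction with
  | singleton a => simpa using hf a (by simp)
  | cons a s ha hs ih =>
    rw [Finset.inf'_cons hs]
    exact cl_inf S (hf a (by simp)) (ih fun b hb => hf b (by simp [hb]))

lemma bool_sup (a b : Bool) : a ⊔ b = (a || b) := rfl
lemma bool_inf (a b : Bool) : a ⊓ b = (a && b) := rfl

lemma bsup' {α : Type*} (s : Finset α) (h : s.Nonempty) (f : α → Bool) :
    s.sup' h f = true ↔ ∃ a ∈ s, f a = true := by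
  induction h using Finset.Nonempty.cons_induction with
  | singleton a => simp
  | cons a s ha hs ih => rw [Finset.sup'_cons hs, bool_sup, Bool.or_eq_true, ih]; simp

lemma binf' {α : Type*} (s : Finset α) (h : s.Nonempty) (f : α → Bool) :
    s.inf' h f = true ↔ ∀ a ∈ s, f a = true := by
  induction h using Finset.Nonempty.cons_induction with
  | singleton a => simp
  | cons a s ha hs ih => rw [Finset.inf'_cons hs, bool_inf, Bool.and_eq_true, ih]; simp

end helpers

/-- Characterization of the closure of `S ⊆ {0,1}^n` under `{∧, ∨}`: a vector `u` with
`𝟙(u) ≠ ∅` belongs to the closure iff `X_i = {v ∈ S : v_i = 1}` is nonempty for every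
`i ∈ 𝟙(u)` and `u = ⋁_{i ∈ 𝟙(u)} ⋀_{v ∈ X_i} v`. -/
theorem closure_and_or_iff {n : ℕ} (S : Set (Fin n → Bool)) (u : Fin n → Bool)
    (hu : ∃ i, u i = true) :
    Cl {(⟨2, fun x => x 0 && x 1⟩ : Op Bool), (⟨2, fun x => x 0 || x 1⟩ : Op Bool)} S u ↔
      ((∀ i, u i = true → {v ∈ S | v i = true}.Nonempty) ∧
        ∀ j, (u j = true ↔ ∃ i, u i = true ∧ ∀ v ∈ {v ∈ S | v i = true}, v j = true)) := by
  show Cl Fao S u ↔ _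
  constructor
  · intro h
    refine ⟨fun i hi => clB S h i hi, fun j => ?_⟩
    constructor
    · intro hj
      exact ⟨j, hj, fun v hv => hv.2⟩
    · rintro ⟨i, hi, hall⟩
      exact clA S h i j hi (fun v hvS hvi => hall v ⟨hvS, hvi⟩)
  · rintro ⟨hne, hchar⟩
    obtain ⟨i0, hi0⟩ := hu
    classical
    have Xfin : ∀ i : Fin n, ({v ∈ S | v i = true} : Set (Fin n → Bool)).Finite :=
      fun i => Set.toFinite _
    have memX : ∀ i v, v ∈ (Xfin i).toFinset ↔ (v ∈ S ∧ v i = true) := by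
      intro i v; rw [Set.Finite.mem_toFinset]; rfl
    let T : Finset (Fin n) := Finset.univ.filter (fun i => u i = true)
    have memT : ∀ i, i ∈ T ↔ u i = true := by intro i; simp [T]
    have hTne : T.Nonempty := ⟨i0, (memT i0).mpr hi0⟩
    have hXne : ∀ i : {x // x ∈ T}, ((Xfin i.1).toFinset).Nonempty := by
      intro i
      obtain ⟨v, hv⟩ := hne i.1 ((memT i.1).mp i.2)
      exact ⟨v, (memX i.1 v).mpr hv⟩
    have key : u = T.attach.sup' (hTne.attach) (fun i =>
        ((Xfin i.1).toFinset).inf' (hXne i) id) := by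
      funext j
      rw [Finset.sup'_apply]
      have hval : ∀ (i : {x // x ∈ T}),
          (((Xfin i.1).toFinset).inf' (hXne i) id) j =
          ((Xfin i.1).toFinset).inf' (hXne i) (fun v => v j) := by
        intro i; rw [Finset.inf'_apply]; rfl
      simp only [hval]
      rcases Bool.eq_false_or_eq_true (u j) with hj | hj
      · rw [hj]; symm
        rw [bsup']
        obtain ⟨i, hi, hall⟩ := (hchar j).mp hj
        have hiT : i ∈ T := (memT i).mpr hi
        refine ⟨⟨i, hiT⟩, Finset.mem_attach _ _, ?_⟩
        rw [binf']
        intro v hv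
        exact hall v ((memX i v).mp hv)
      · rw [hj]; symm
        rw [Bool.eq_false_iff]
        intro hcon
        rw [bsup'] at hcon
        obtain ⟨i, -, hinf⟩ := hcon
        rw [binf'] at hinf
        have : u j = true := (hchar j).mpr ⟨i.1, (memT i.1).mp i.2,
          fun v hv => hinf v ((memX i.1 v).mpr hv)⟩
        rw [hj] at this; exact Bool.false_ne_true this
    rw [key]
    apply cl_sup'
    intro i _
    apply cl_inf'
    intro v hv
    exact Cl.base ((memX i.1 v).mp hv).1
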